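/- Every finite set A of n positive integers contains a k-sum-free subset of size at least n/(k+1). -/

import Mathlib

def KSumFreeFinset (k : ℕ) (S : Finset ℕ) : Prop :=
  ¬ ∃ a : Fin k → ℕ, (∀ i, a i ∈ S) ∧ (∑ i, a i) ∈ S

theorem stmt_0 (k : ℕ) (hk : 2 ≤ k) (A : Finset ℕ) (hA : ∀ a ∈ A, 0 < a) :
    ∃ S ⊆ A, KSumFreeFinset k S ∧ (A.card : ℝ) / (k + 1) ≤ S.card := by
  have h4 : 4 ≤ k * k := Nat.mul_le_mul hk hk
  have h2k : 2 * k ≤ k * k := Nat.mul_le_mul_right k hk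
  obtain ⟨p, hp, hpgt, hpmod⟩ :=
    Nat.exists_prime_gt_modEq_one (k := k * k - 1) (k * k + A.sup id) (by omega)
  haveI : Fact p.Prime := ⟨hp⟩
  haveI : NeZero p := ⟨hp.pos.ne'⟩
  set m : ℕ := p / (k * k - 1) with hmdef
  have hpmod' : p % (k * k - 1) = 1 := by
    have h1 : p % (k * k - 1) = 1 % (k * k - 1) := hpmod
    rwa [Nat.mod_eq_of_lt (by omega : 1 < k * k - 1)] at h1
  have hpm : p = (k * k - 1) * m + 1 := by
    have h := Nat.div_add_mod p (k * k - 1)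
    rw [← hmdef] at h
    omega
  have hm1 : 1 ≤ m := by
    rcases Nat.eq_zero_or_pos m with h0 | h
    · rw [h0, mul_zero] at hpm
      have := hp.two_le
      omega
    · exact h
  have hkm : k * m ≤ (k * k - 1) * m := Nat.mul_le_mul_right m (by omega)
  set S : ℕ → Finset ℕ :=
    fun x => A.filter (fun a => m + 1 ≤ a * x % p ∧ a * x % p ≤ k * m) with hS
  -- each S x is k-sum-free
  have hfree : ∀ x, KSumFreeFinset k (S x) := by
    intro x ⟨a, hmem, hsum⟩
    set T : ℕ := ∑ i, a i * x % p with hT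
    have hTlb : k * (m + 1) ≤ T := by
      calc k * (m + 1) = ∑ _i : Fin k, (m + 1) := by simp [mul_comm]
        _ ≤ T := Finset.sum_le_sum (fun i _ => ((Finset.mem_filter.1 (hmem i)).2).1)
    have hTub : T ≤ k * (k * m) := by
      calc T ≤ ∑ _i : Fin k, k * m :=
            Finset.sum_le_sum (fun i _ => ((Finset.mem_filter.1 (hmem i)).2).2)
        _ = k * (k * m) := by simp [mul_comm]
    have hmodeq : (∑ i, a i) * x % p = T % p := by
      rw [Finset.sum_mul, Finset.sum_nat_mod]
    have hb := (Finset.mem_filter.1 hsum).2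
    rw [hmodeq] at hb
    have e1 : k * (m + 1) = k * m + k := by ring
    have e2 : k * (k * m) = (k * k) * m := by ring
    have e3 : 4 * m ≤ (k * k) * m := Nat.mul_le_mul_right m h4
    have e4 : (k * k - 1) * m = (k * k) * m - m := by rw [Nat.sub_mul, one_mul]
    have e5 : m ≤ (k * k) * m := Nat.le_mul_of_pos_left m (by omega)
    rcases lt_or_ge T p with h | h
    · rw [Nat.mod_eq_of_lt h] at hb; omega
    · have h2 : T - p < p := by omega
      rw [Nat.mod_eq_sub_mod h, Nat.mod_eq_of_lt h2] at hb
      omega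
  -- counting for a fixed a ∈ A
  have hcount : ∀ a ∈ A, ((Finset.Ioo 0 p).filter
      (fun x => m + 1 ≤ a * x % p ∧ a * x % p ≤ k * m)).card = (k - 1) * m := by
    intro a ha
    have ha0 : 0 < a := hA a ha
    have hap : a < p := lt_of_le_of_lt (le_trans (Finset.le_sup (f := id) ha) (by omega)) hpgt
    have haz : (a : ZMod p) ≠ 0 := fun h0 =>
      absurd (Nat.le_of_dvd ha0 ((ZMod.natCast_eq_zero_iff _ _).1 h0)) (by omega)
    have hcardIcc : (Finset.Icc (m + 1) (k * m)).card = (k - 1) * m := by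
      rw [Nat.card_Icc]
      have : (k - 1) * m = k * m - m := by rw [Nat.sub_mul, one_mul]
      omega
    rw [← hcardIcc]
    apply Finset.card_nbij' (fun x => a * x % p)
      (fun y => ((a : ZMod p)⁻¹ * (y : ZMod p)).val)
    · intro x hx
      simp only [Finset.mem_coe, Finset.mem_filter] at hx
      exact Finset.mem_Icc.2 ⟨hx.2.1, hx.2.2⟩
    · intro y hy
      rw [Finset.mem_coe, Finset.mem_Icc] at hy
      have hyp : y < p := by omega
      have hy0 : 0 < y := by omega
      have hyz : (y : ZMod p) ≠ 0 := fun h0 =>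
        absurd (Nat.le_of_dvd hy0 ((ZMod.natCast_eq_zero_iff _ _).1 h0)) (by omega)
      have huz : (a : ZMod p)⁻¹ * (y : ZMod p) ≠ 0 :=
        mul_ne_zero (inv_ne_zero haz) hyz
      have hval : a * ((a : ZMod p)⁻¹ * (y : ZMod p)).val % p = y := by
        have hcst : ((a * ((a : ZMod p)⁻¹ * (y : ZMod p)).val : ℕ) : ZMod p) = (y : ZMod p) := by
          push_cast
          rw [ZMod.natCast_zmod_val, ← mul_assoc, mul_inv_cancel₀ haz, one_mul]
        calc a * ((a : ZMod p)⁻¹ * (y : ZMod p)).val % p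
            = ((a * ((a : ZMod p)⁻¹ * (y : ZMod p)).val : ℕ) : ZMod p).val := by
              rw [ZMod.val_natCast]
          _ = ((y : ℕ) : ZMod p).val := by rw [hcst]
          _ = y := ZMod.val_natCast_of_lt hyp
      refine Finset.mem_filter.2 ⟨Finset.mem_Ioo.2 ⟨?_, ZMod.val_lt _⟩, ?_, ?_⟩
      · exact Nat.pos_of_ne_zero (fun h0 => huz ((ZMod.val_eq_zero _).1 h0))
      · rw [hval]; exact hy.1
      · rw [hval]; exact hy.2
    · intro x hx
      simp only [Finset.mem_coe, Finset.mem_filter, Finset.mem_Ioo] at hx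
      have hcst : ((a * x % p : ℕ) : ZMod p) = (a : ZMod p) * (x : ZMod p) := by
        rw [ZMod.natCast_mod]; push_cast; ring
      show ((a : ZMod p)⁻¹ * ((a * x % p : ℕ) : ZMod p)).val = x
      rw [hcst, ← mul_assoc, inv_mul_cancel₀ haz, one_mul,
        ZMod.val_natCast_of_lt hx.1.2]
    · intro y hy
      rw [Finset.mem_coe, Finset.mem_Icc] at hy
      have hyp : y < p := by omega
      have hcst : ((a * ((a : ZMod p)⁻¹ * (y : ZMod p)).val : ℕ) : ZMod p) = (y : ZMod p) := by
        push_cast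
        rw [ZMod.natCast_zmod_val, ← mul_assoc, mul_inv_cancel₀ haz, one_mul]
      calc a * ((a : ZMod p)⁻¹ * (y : ZMod p)).val % p
          = ((a * ((a : ZMod p)⁻¹ * (y : ZMod p)).val : ℕ) : ZMod p).val := by
            rw [ZMod.val_natCast]
        _ = ((y : ℕ) : ZMod p).val := by rw [hcst]
        _ = y := ZMod.val_natCast_of_lt hyp
  -- total count
  have htotal : ∑ x ∈ Finset.Ioo 0 p, (S x).card = A.card * ((k - 1) * m) := by
    calc ∑ x ∈ Finset.Ioo 0 p, (S x).card
        = ∑ x ∈ Finset.Ioo 0 p, ∑ a ∈ A,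
            if m + 1 ≤ a * x % p ∧ a * x % p ≤ k * m then 1 else 0 := by
          refine Finset.sum_congr rfl (fun x _ => ?_)
          rw [hS, Finset.card_filter]
      _ = ∑ a ∈ A, ∑ x ∈ Finset.Ioo 0 p,
            if m + 1 ≤ a * x % p ∧ a * x % p ≤ k * m then 1 else 0 := Finset.sum_comm
      _ = ∑ a ∈ A, ((Finset.Ioo 0 p).filter
            (fun x => m + 1 ≤ a * x % p ∧ a * x % p ≤ k * m)).card := by
          refine Finset.sum_congr rfl (fun a _ => ?_)
          rw [Finset.card_filter]
      _ = ∑ _a ∈ A, (k - 1) * m := Finset.sum_congr rfl hcount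
      _ = A.card * ((k - 1) * m) := by rw [Finset.sum_const, smul_eq_mul]
  -- pigeonhole
  have hne : (Finset.Ioo 0 p).Nonempty := ⟨1, Finset.mem_Ioo.2 ⟨one_pos, hp.one_lt⟩⟩
  have hcardIoo : (Finset.Ioo 0 p).card = (k * k - 1) * m := by
    rw [Nat.card_Ioo]; omega
  obtain ⟨x, -, hx⟩ : ∃ x ∈ Finset.Ioo 0 p,
      A.card * ((k - 1) * m) ≤ ((k * k - 1) * m) * (S x).card := by
    apply Finset.exists_le_of_sum_le hne
    rw [Finset.sum_const, ← Finset.mul_sum, htotal, hcardIoo, smul_eq_mul]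
  have hkk1 : k * k - 1 = (k + 1) * (k - 1) := by
    obtain ⟨j, rfl⟩ : ∃ j, k = j + 1 := ⟨k - 1, by omega⟩
    have h1 : j + 1 - 1 = j := by omega
    have h2 : (j + 1 + 1) * j = j * j + 2 * j := by ring
    have h3 : (j + 1) * (j + 1) = j * j + 2 * j + 1 := by ring
    rw [h1, h2]
    omega
  have hAle : A.card ≤ (k + 1) * (S x).card := by
    have hc : 0 < (k - 1) * m := Nat.mul_pos (by omega) hm1
    have hmain : A.card * ((k - 1) * m) ≤ ((k + 1) * (S x).card) * ((k - 1) * m) := by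
      calc A.card * ((k - 1) * m) ≤ ((k * k - 1) * m) * (S x).card := hx
        _ = ((k + 1) * (S x).card) * ((k - 1) * m) := by rw [hkk1]; ring
    exact Nat.le_of_mul_le_mul_right hmain hc
  refine ⟨S x, Finset.filter_subset _ _, hfree x, ?_⟩
  rw [div_le_iff₀ (by positivity)]
  calc (A.card : ℝ) ≤ ((k + 1) * (S x).card : ℕ) := by exact_mod_cast hAle
    _ = (S x).card * ((k : ℝ) + 1) := by push_cast; ring
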